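/- Let (x_r(t), u_r(t)) be a T-periodic reference, ℓ_e a stage cost, and V_fe a terminal cost satisfying the one-step decrease V_fe(f(x, k_f(x,t)), t+1) - V_fe(x,t) ≤ -ℓ_e(x, k_f(x,t), t) + ℓ_e(x_r(t), u_r(t), t) for all t and x ∈ X_f(t). Define the shifted terminal cost Ṽ_fe(x,t) := V_fe(x,t) + ∑_{k=0}^{T-2} ((T-1-k)/T)·ℓ_e(x_r(t+k), u_r(t+k), t+k). Then Ṽ_fe satisfies Ṽ_fe(f(x,k_f(x,t)), t+1) - Ṽ_fe(x,t) + ℓ_e(x, k_f(x,t), t) ≤ (1/T)∑_{k=0}^{T-1} ℓ_e(x_r(k), u_r(k), k), i.e., the decrease is with respect to the average cost over one period. -/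
import Mathlib


/-- Shifted terminal cost achieves a decrease w.r.t. the average cost over one period. -/
theorem stmt4 {X U : Type*}
    (T : ℕ) (hT : 1 ≤ T)
    (f : X → U → X)
    (ℓe : X → U → ℕ → ℝ)
    (Vfe : X → ℕ → ℝ)
    (kf : X → ℕ → U)
    (Xf : ℕ → Set X)
    (xr : ℕ → X) (ur : ℕ → U)
    (hper : ∀ t, ℓe (xr (t+T)) (ur (t+T)) (t+T) = ℓe (xr t) (ur t) t)
    (hdec : ∀ t, ∀ x ∈ Xf t,
      Vfe (f x (kf x t)) (t+1) - Vfe x t ≤ - ℓe x (kf x t) t + ℓe (xr t) (ur t) t)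
    (Vtil : X → ℕ → ℝ)
    (hVtil : ∀ x t, Vtil x t = Vfe x t +
      ∑ k ∈ Finset.range (T-1), (((T:ℝ) - 1 - k)/T) * ℓe (xr (t+k)) (ur (t+k)) (t+k)) :
    ∀ t, ∀ x ∈ Xf t,
      Vtil (f x (kf x t)) (t+1) - Vtil x t + ℓe x (kf x t) t
        ≤ (1/(T:ℝ)) * ∑ k ∈ Finset.range T, ℓe (xr k) (ur k) k := by
  obtain ⟨n, rfl⟩ : ∃ n, T = n + 1 := ⟨T - 1, (Nat.succ_pred_eq_of_pos hT).symm⟩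
  set L : ℕ → ℝ := fun t => ℓe (xr t) (ur t) t with hL
  have hT0 : ((n:ℝ) + 1) ≠ 0 := by positivity
  -- sum of L over any full period equals sum over the first period
  have hsum : ∀ t, ∑ j ∈ Finset.range (n+1), L (t+j)
      = ∑ j ∈ Finset.range (n+1), L j := by
    intro t
    induction t with
    | zero => simp
    | succ t ih =>
      rw [← ih, Finset.sum_range_succ, Finset.sum_range_succ' (fun j => L (t+j))]
      have h1 : L (t+1+n) = L (t+0) := by
        have := hper t
        simp only [hL]
        rw [show t+1+n = t+(n+1) by omega, show t+0 = t by omega]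
        exact this
      have h2 : ∀ j ∈ Finset.range n, L (t+1+j) = L (t+(j+1)) := by
        intro j _
        congr 1
        omega
      rw [Finset.sum_congr rfl h2, h1]
  -- the shifted-sum telescoping identity
  set S : ℕ → ℝ := fun t => ∑ k ∈ Finset.range n,
      ((((n:ℝ)+1) - 1 - k)/((n:ℝ)+1)) * L (t+k) with hS
  have key : ∀ t, S (t+1) + L t - S t
      = (1/((n:ℝ)+1)) * ∑ j ∈ Finset.range (n+1), L (t+j) := by
    intro t
    have hA : ∑ j ∈ Finset.range (n+1), ((((n:ℝ)+1) - j)/((n:ℝ)+1)) * L (t+j)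
        = S (t+1) + L t := by
      rw [Finset.sum_range_succ' (fun j => ((((n:ℝ)+1) - j)/((n:ℝ)+1)) * L (t+j))]
      have h1 : ∀ j ∈ Finset.range n,
          ((((n:ℝ)+1) - (j+1:ℕ))/((n:ℝ)+1)) * L (t+(j+1))
          = ((((n:ℝ)+1) - 1 - j)/((n:ℝ)+1)) * L (t+1+j) := by
        intro j _
        rw [show t+(j+1) = t+1+j by omega]
        push_cast
        ring
      rw [Finset.sum_congr rfl h1]
      simp only [hS, Nat.cast_zero, sub_zero, add_zero, div_self hT0, one_mul]
    have hB : ∑ j ∈ Finset.range (n+1), ((((n:ℝ)+1) - 1 - j)/((n:ℝ)+1)) * L (t+j)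
        = S t := by
      rw [Finset.sum_range_succ, show (((n:ℝ)+1) - 1 - (n:ℝ)) = 0 by ring,
        zero_div, zero_mul, add_zero]
    calc S (t+1) + L t - S t
        = ∑ j ∈ Finset.range (n+1), ((((n:ℝ)+1) - j)/((n:ℝ)+1)) * L (t+j)
          - ∑ j ∈ Finset.range (n+1), ((((n:ℝ)+1) - 1 - j)/((n:ℝ)+1)) * L (t+j) := by
          rw [hA, hB]
      _ = ∑ j ∈ Finset.range (n+1), (1/((n:ℝ)+1)) * L (t+j) := by
          rw [← Finset.sum_sub_distrib]
          apply Finset.sum_congr rfl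
          intro j _
          field_simp
          ring
      _ = (1/((n:ℝ)+1)) * ∑ j ∈ Finset.range (n+1), L (t+j) := by
          rw [Finset.mul_sum]
  intro t x hx
  have hd := hdec t x hx
  have hV1 := hVtil (f x (kf x t)) (t+1)
  have hV2 := hVtil x t
  have hcast : ∀ s : ℕ, ∑ k ∈ Finset.range (n+1-1),
      (((↑(n+1):ℝ) - 1 - k)/(↑(n+1):ℝ)) * ℓe (xr (s+k)) (ur (s+k)) (s+k) = S s := by
    intro s
    simp only [Nat.add_sub_cancel, hS, hL]
    apply Finset.sum_congr rfl
    intro k _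
    push_cast
    ring
  rw [hcast] at hV1 hV2
  have hk := key t
  have hs := hsum t
  have hgoal : (1/((↑(n+1):ℝ))) * ∑ k ∈ Finset.range (n+1), ℓe (xr k) (ur k) k
      = (1/((n:ℝ)+1)) * ∑ j ∈ Finset.range (n+1), L j := by push_cast; rfl
  rw [hV1, hV2, hgoal]
  have : ℓe x (kf x t) t = ℓe x (kf x t) t := rfl
  have hLt : ℓe (xr t) (ur t) t = L t := rfl
  rw [hs] at hk
  linarith [hk, hd]
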